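/- Let m ≥ 3 and let v_1, …, v_m ∈ ℂⁿ satisfy v_1 + ⋯ + v_m = 0. Let p_0 = 0 and p_k = v_1 + ⋯ + v_k for k = 1, …, m (so p_m = 0), and let A = (1/2) Σ_{k=0}^{m−1} ω(p_k, p_{k+1}) be the symplectic action of the closed polygon with side vectors v_1, …, v_m. Then A ≤ (1 / (4 tan(π/m))) · Σ_{i=1}^{m} ‖v_i‖². -/

import Mathlib

noncomputable section

open Set intervalIntegral

/-- `ℂⁿ`, the complex Euclidean space. -/
abbrev Cn (n : ℕ) := EuclideanSpace ℂ (Fin n)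

/-- The standard symplectic form `ω(x,y) = Im⟨x,y⟩` (inner product conjugate-linear in the
first argument). -/
def symp {n : ℕ} (x y : Cn n) : ℝ := (inner ℂ x y : ℂ).im

/-- `J`, multiplication by the imaginary unit. -/
def Jmul {n : ℕ} (x : Cn n) : Cn n := Complex.I • x

/-- The polar body `K° = {y : ⟨x,y⟩_ℝ ≤ 1 for all x ∈ K}`. -/
def polarC {n : ℕ} (K : Set (Cn n)) : Set (Cn n) :=
  {y | ∀ x ∈ K, (inner ℂ x y : ℂ).re ≤ 1}

/-- `c_J(K)`, defined by `c_J(K)⁻¹ = sup {ω(x,y) : x, y ∈ K°}`. -/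
def cJ {n : ℕ} (K : Set (Cn n)) : ℝ :=
  (sSup {r : ℝ | ∃ x ∈ polarC K, ∃ y ∈ polarC K, r = symp x y})⁻¹


section AuxPolygon
open Finset Complex

lemma dvd3 (m D : ℕ) (h2 : D < 3*m) (h : m ∣ D) : D = 0 ∨ D = m ∨ D = 2*m := by
  rcases h with ⟨t, rfl⟩
  rcases t with _ | _ | _ | t
  · left; ring
  · right; left; ring
  · right; right; ring
  · exfalso
    have h3 : m * 3 ≤ m * (t+1+1+1) := Nat.mul_le_mul_left m (by omega)
    omega


lemma Esum (m : ℕ) (hm : m ≠ 0) (d : ℕ) :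
    ∑ l ∈ range m, (Complex.exp (2*Real.pi*I/m)) ^ (d*l)
      = if m ∣ d then (m:ℂ) else 0 := by
  set ζ : ℂ := Complex.exp (2*Real.pi*I/m) with hζ
  have hprim : IsPrimitiveRoot ζ m := Complex.isPrimitiveRoot_exp m hm
  by_cases h : m ∣ d
  · have h1 : ζ ^ d = 1 := (hprim.pow_eq_one_iff_dvd d).2 h
    simp only [if_pos h]
    calc ∑ l ∈ range m, ζ ^ (d*l) = ∑ l ∈ range m, (1:ℂ) := by
          refine Finset.sum_congr rfl fun l _ => ?_
          rw [pow_mul, h1, one_pow]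
      _ = m := by simp
  · have h1 : ζ ^ d ≠ 1 := fun hc => h ((hprim.pow_eq_one_iff_dvd d).1 hc)
    have h2 : (ζ ^ d) ^ m = 1 := by
      rw [← pow_mul, mul_comm, pow_mul, hprim.pow_eq_one, one_pow]
    simp only [if_neg h]
    calc ∑ l ∈ range m, ζ ^ (d*l) = ∑ l ∈ range m, (ζ^d) ^ l := by
          refine Finset.sum_congr rfl fun l _ => ?_; rw [pow_mul]
      _ = ((ζ^d)^m - 1)/(ζ^d - 1) := geom_sum_eq h1 m
      _ = 0 := by rw [h2]; simp

lemma hrhs_aux (mr cr pr : ℝ) (z : ℂ) :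
    (mr:ℂ) * (2*(cr:ℂ)*(pr:ℂ) - ((cr:ℂ)+Complex.I/2)*((starRingEnd ℂ) z) - ((cr:ℂ)-Complex.I/2)*z)
    = ((mr * (2*cr*pr - 2*cr*z.re - z.im) : ℝ) : ℂ) := by
  obtain ⟨a, b⟩ := z
  simp only [Complex.ext_iff, Complex.mul_re, Complex.mul_im, Complex.sub_re, Complex.sub_im,
    Complex.add_re, Complex.add_im, Complex.ofReal_re, Complex.ofReal_im, Complex.I_re,
    Complex.I_im, Complex.div_ofNat_re, Complex.div_ofNat_im, RingHom.coe_coe]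
  simp [Complex.conj_re, Complex.conj_im]
  constructor <;> (ring_nf; tauto)

set_option maxHeartbeats 1000000 in
lemma key {n : ℕ} (m : ℕ) (hm : 3 ≤ m) (p : ℕ → Cn n) (hp0 : p 0 = 0) (hpm : p m = 0) :
    ∑ k ∈ range m, (inner ℂ (p k) (p (k+1)) : ℂ).im
      ≤ (1/(2*Real.tan (Real.pi/m))) * ∑ k ∈ range m, ‖p (k+1) - p k‖^2 := by
  have hm0 : m ≠ 0 := by omega
  set α : ℝ := Real.pi/m with hα
  set c : ℝ := 1/(2*Real.tan α) with hc
  set ζ : ℂ := Complex.exp (2*Real.pi*I/m) with hζ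
  have habs : ‖ζ‖ = 1 := by
    show ‖ζ‖ = 1
    rw [hζ, Complex.norm_exp]
    norm_num [Complex.div_re]
  -- conj of powers
  have hconj : ∀ j : ℕ, (starRingEnd ℂ) (ζ^j) = (ζ^j)⁻¹ := by
    intro j
    rw [← Complex.inv_eq_conj (by rw [norm_pow, habs, one_pow])]
  have hζm : ζ ^ m = 1 := (Complex.isPrimitiveRoot_exp m hm0).pow_eq_one
  have hζne : ∀ j : ℕ, ζ ^ j ≠ 0 := fun j => pow_ne_zero j (Complex.exp_ne_zero _)
  -- DFT vectors
  set b : ℕ → Cn n := fun l => ∑ k ∈ range m, (ζ^(k*l)) • p k with hb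
  set μ : ℕ → ℂ := fun l => 2*c - (c + I/2) * ζ^l - (c - I/2) * ζ^((m-1)*l) with hμ
  -- expansion of ⟪b l, b l⟫
  have hbb : ∀ l, (inner ℂ (b l) (b l) : ℂ)
      = ∑ k ∈ range m, ∑ k' ∈ range m, ζ^((k' + (m-k))*l) * (inner ℂ (p k) (p k') : ℂ) := by
    intro l
    rw [hb]
    rw [sum_inner]
    refine Finset.sum_congr rfl fun k hk => ?_
    rw [inner_sum]
    refine Finset.sum_congr rfl fun k' hk' => ?_
    rw [inner_smul_left, inner_smul_right, hconj]
    have hk2 : k < m := mem_range.1 hk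
    have h1 : ζ^(k*l) * ζ^((m-k)*l) = 1 := by
      rw [← pow_add, ← Nat.add_mul, Nat.add_sub_cancel' (le_of_lt hk2), pow_mul, hζm, one_pow]
    have hpow2 : ζ^((k'+(m-k))*l) = ζ^(k'*l) * ζ^((m-k)*l) := by
      rw [← pow_add, Nat.add_mul]
    have hscal : (ζ^(k*l))⁻¹ * ζ^(k'*l) = ζ^((k' + (m-k))*l) := by
      rw [inv_mul_eq_iff_eq_mul₀ (hζne _), hpow2]
      linear_combination (-(ζ^(k'*l))) * h1
    rw [← mul_assoc, hscal]
  -- abbreviations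
  set T : ℂ := ∑ k ∈ range m, (inner ℂ (p k) (p (k+1)) : ℂ) with hT
  set T' : ℂ := ∑ k ∈ range m, (inner ℂ (p (k+1)) (p k) : ℂ) with hT'
  set P : ℂ := ∑ k ∈ range m, (inner ℂ (p k) (p k) : ℂ) with hP
  have hmod : ∀ k < m, p ((k+1) % m) = p (k+1) := by
    intro k hk
    rcases Nat.lt_or_ge (k+1) m with h|h
    · rw [Nat.mod_eq_of_lt h]
    · have h1 : k+1 = m := by omega
      rw [h1, Nat.mod_self, hp0, hpm]
  have hEf : ∀ d, ∑ l ∈ range m, ζ^(d*l) = if m ∣ d then (m:ℂ) else 0 := Esum m hm0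
  have hlsum : ∀ Dv : ℕ, ∑ l ∈ range m, μ l * ζ^(Dv*l)
      = 2*(c:ℂ)*(if m ∣ Dv then (m:ℂ) else 0) - ((c:ℂ)+I/2)*(if m ∣ Dv+1 then (m:ℂ) else 0)
        - ((c:ℂ)-I/2)*(if m ∣ Dv+m-1 then (m:ℂ) else 0) := by
    intro Dv
    have e1 : ∀ l ∈ range m, μ l * ζ^(Dv*l)
        = 2*(c:ℂ)*ζ^(Dv*l) - ((c:ℂ)+I/2)*ζ^((Dv+1)*l) - ((c:ℂ)-I/2)*ζ^((Dv+m-1)*l) := by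
      intro l _
      have p1 : ζ^l * ζ^(Dv*l) = ζ^((Dv+1)*l) := by
        rw [← pow_add]; congr 1; ring
      have p2 : ζ^((m-1)*l) * ζ^(Dv*l) = ζ^((Dv+m-1)*l) := by
        have hq : m-1+Dv = Dv+m-1 := by omega
        rw [← pow_add, ← Nat.add_mul, hq]
      calc μ l * ζ^(Dv*l)
          = 2*(c:ℂ)*ζ^(Dv*l) - ((c:ℂ)+I/2)*(ζ^l*ζ^(Dv*l)) - ((c:ℂ)-I/2)*(ζ^((m-1)*l)*ζ^(Dv*l)) := by
            simp only [hμ]; ring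
        _ = _ := by rw [p1, p2]
    rw [Finset.sum_congr rfl e1, Finset.sum_sub_distrib, Finset.sum_sub_distrib,
      ← Finset.mul_sum, ← Finset.mul_sum, ← Finset.mul_sum, hEf, hEf, hEf]
  -- collapse lemmas
  have t1 : ∑ k ∈ range m, ∑ k' ∈ range m,
      (if m ∣ (k'+(m-k)) then (m:ℂ) else 0) * (inner ℂ (p k) (p k') : ℂ) = (m:ℂ) * P := by
    rw [hP, Finset.mul_sum]
    refine Finset.sum_congr rfl fun k hk => ?_
    have hk2 := mem_range.1 hk
    rw [Finset.sum_eq_single_of_mem k hk]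
    · have h1 : k+(m-k) = m := by omega
      rw [h1, if_pos dvd_rfl]
    · intro k' hk' hne
      have hk'2 := mem_range.1 hk'
      rw [if_neg, zero_mul]
      intro hdvd
      have := dvd3 m _ (by omega) hdvd
      omega
  have t2 : ∑ k ∈ range m, ∑ k' ∈ range m,
      (if m ∣ (k'+(m-k)+1) then (m:ℂ) else 0) * (inner ℂ (p k) (p k') : ℂ) = (m:ℂ) * T' := by
    rw [Finset.sum_comm, hT', Finset.mul_sum]
    refine Finset.sum_congr rfl fun k' hk' => ?_
    have hk'2 := mem_range.1 hk'
    have hw : ((k'+1) % m = k'+1 ∧ k'+1 < m) ∨ ((k'+1) % m = 0 ∧ k'+1 = m) := by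
      rcases Nat.lt_or_ge (k'+1) m with h|h
      · exact Or.inl ⟨Nat.mod_eq_of_lt h, h⟩
      · have h1 : k'+1 = m := by omega
        exact Or.inr ⟨by rw [h1, Nat.mod_self], h1⟩
    rw [Finset.sum_eq_single_of_mem ((k'+1) % m) (mem_range.2 (Nat.mod_lt _ (by omega)))]
    · rw [hmod k' hk'2, if_pos]
      rcases hw with ⟨h1,h2⟩|⟨h1,h2⟩
      · rw [h1]
        have h3 : k' + (m-(k'+1)) + 1 = m := by omega
        rw [h3]
      · rw [h1]
        have h3 : k' + (m-0) + 1 = m*2 := by omega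
        rw [h3]
        exact Dvd.intro 2 rfl
    · intro k hk hne
      have hk2 := mem_range.1 hk
      rw [if_neg, zero_mul]
      intro hdvd
      have := dvd3 m _ (by omega) hdvd
      rcases hw with ⟨h1,h2⟩|⟨h1,h2⟩ <;> omega
  have t3 : ∑ k ∈ range m, ∑ k' ∈ range m,
      (if m ∣ (k'+(m-k)+m-1) then (m:ℂ) else 0) * (inner ℂ (p k) (p k') : ℂ) = (m:ℂ) * T := by
    rw [hT, Finset.mul_sum]
    refine Finset.sum_congr rfl fun k hk => ?_
    have hk2 := mem_range.1 hk
    have hw : ((k+1) % m = k+1 ∧ k+1 < m) ∨ ((k+1) % m = 0 ∧ k+1 = m) := by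
      rcases Nat.lt_or_ge (k+1) m with h|h
      · exact Or.inl ⟨Nat.mod_eq_of_lt h, h⟩
      · have h1 : k+1 = m := by omega
        exact Or.inr ⟨by rw [h1, Nat.mod_self], h1⟩
    rw [Finset.sum_eq_single_of_mem ((k+1) % m) (mem_range.2 (Nat.mod_lt _ (by omega)))]
    · rw [hmod k hk2, if_pos]
      rcases hw with ⟨h1,h2⟩|⟨h1,h2⟩
      · rw [h1]
        have h3 : (k+1) + (m-k) + m - 1 = m*2 := by omega
        rw [h3]
        exact Dvd.intro 2 rfl
      · rw [h1]
        have h3 : 0 + (m-k) + m - 1 = m := by omega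
        rw [h3]
    · intro k' hk' hne
      have hk'2 := mem_range.1 hk'
      rw [if_neg, zero_mul]
      intro hdvd
      have := dvd3 m _ (by omega) hdvd
      rcases hw with ⟨h1,h2⟩|⟨h1,h2⟩ <;> omega
  -- the main identity
  have hmain : ∑ l ∈ range m, μ l * (inner ℂ (b l) (b l) : ℂ)
      = (m:ℂ) * (2*(c:ℂ)*P - ((c:ℂ)+I/2)*T' - ((c:ℂ)-I/2)*T) := by
    have step1 : ∑ l ∈ range m, μ l * (inner ℂ (b l) (b l):ℂ)
        = ∑ k ∈ range m, ∑ k' ∈ range m,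
            (∑ l ∈ range m, μ l * ζ^((k'+(m-k))*l)) * (inner ℂ (p k) (p k') : ℂ) := by
      have e : ∀ l ∈ range m, μ l * (inner ℂ (b l) (b l):ℂ)
          = ∑ k ∈ range m, ∑ k' ∈ range m, μ l * ζ^((k'+(m-k))*l) * (inner ℂ (p k) (p k'):ℂ) := by
        intro l _
        rw [hbb l, Finset.mul_sum]
        refine Finset.sum_congr rfl fun k _ => ?_
        rw [Finset.mul_sum]
        refine Finset.sum_congr rfl fun k' _ => ?_
        ring
      rw [Finset.sum_congr rfl e, Finset.sum_comm]
      refine Finset.sum_congr rfl fun k _ => ?_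
      rw [Finset.sum_comm]
      refine Finset.sum_congr rfl fun k' _ => ?_
      rw [← Finset.sum_mul]
    rw [step1]
    have e2 : ∀ k ∈ range m, ∀ k' ∈ range m, True := fun _ _ _ _ => trivial
    calc ∑ k ∈ range m, ∑ k' ∈ range m,
            (∑ l ∈ range m, μ l * ζ^((k'+(m-k))*l)) * (inner ℂ (p k) (p k') : ℂ)
        = ∑ k ∈ range m, ∑ k' ∈ range m,
            (2*(c:ℂ)*((if m ∣ (k'+(m-k)) then (m:ℂ) else 0) * (inner ℂ (p k) (p k'):ℂ))
             - ((c:ℂ)+I/2)*((if m ∣ (k'+(m-k)+1) then (m:ℂ) else 0) * (inner ℂ (p k) (p k'):ℂ))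
             - ((c:ℂ)-I/2)*((if m ∣ (k'+(m-k)+m-1) then (m:ℂ) else 0) * (inner ℂ (p k) (p k'):ℂ))) := by
          refine Finset.sum_congr rfl fun k _ => Finset.sum_congr rfl fun k' _ => ?_
          rw [hlsum]; ring
      _ = 2*(c:ℂ)*((m:ℂ)*P) - ((c:ℂ)+I/2)*((m:ℂ)*T') - ((c:ℂ)-I/2)*((m:ℂ)*T) := by
          rw [← t1, ← t2, ← t3]
          simp only [Finset.sum_sub_distrib, Finset.mul_sum]
      _ = (m:ℂ) * (2*(c:ℂ)*P - ((c:ℂ)+I/2)*T' - ((c:ℂ)-I/2)*T) := by ring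
  -- real form of μ
  have hμreal : ∀ l : ℕ, μ l
      = ((2*c - 2*c*Real.cos (2*Real.pi*l/m) + Real.sin (2*Real.pi*l/m) : ℝ) : ℂ) := by
    intro l
    have hz : ζ^l = (Real.cos (2*Real.pi*l/m) : ℂ) + (Real.sin (2*Real.pi*l/m) : ℂ) * I := by
      rw [hζ, ← Complex.exp_nat_mul]
      have he : (l:ℂ) * (2*Real.pi*I/m) = ((2*Real.pi*l/m : ℝ) : ℂ) * I := by
        have hmc : (m:ℂ) ≠ 0 := Nat.cast_ne_zero.2 hm0
        push_cast
        field_simp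
      rw [he, Complex.exp_mul_I]
      simp
    have hz' : ζ^((m-1)*l) = (starRingEnd ℂ) (ζ^l) := by
      rw [hconj]
      have h1 : ζ^((m-1)*l) * ζ^l = 1 := by
        rw [← pow_add]
        have h2 : (m-1)*l + l = m*l := by
          have h3 : (m-1) + 1 = m := by omega
          calc (m-1)*l + l = ((m-1)+1)*l := by ring
            _ = m*l := by rw [h3]
        rw [h2, pow_mul, hζm, one_pow]
      exact eq_inv_of_mul_eq_one_left h1
    simp only [hμ]
    rw [hz', hz]
    simp only [map_add, map_mul, Complex.conj_ofReal, Complex.conj_I]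
    apply Complex.ext <;> simp <;> ring
  -- positivity of the eigenvalues
  have hΛpos : ∀ l ∈ range m,
      0 ≤ 2*c - 2*c*Real.cos (2*Real.pi*l/m) + Real.sin (2*Real.pi*l/m) := by
    intro l hl
    have hl2 := mem_range.1 hl
    set θ : ℝ := 2*Real.pi*l/m with hθ
    have hmr : (0:ℝ) < m := by positivity
    have hα1 : 0 < α := by rw [hα]; positivity
    have hα2 : α ≤ Real.pi/3 := by
      rw [hα]
      apply div_le_div_of_nonneg_left Real.pi_pos.le (by norm_num)
      exact_mod_cast hm
    have hαpi : α < Real.pi/2 := lt_of_le_of_lt hα2 (by linarith [Real.pi_pos])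
    have hsin : 0 < Real.sin α := Real.sin_pos_of_pos_of_lt_pi hα1 (by linarith [Real.pi_pos])
    have hcos : 0 < Real.cos α := Real.cos_pos_of_mem_Ioo ⟨by linarith, hαpi⟩
    have hθ0 : 0 ≤ θ := by rw [hθ]; positivity
    have hθub : θ + 2*α ≤ 2*Real.pi := by
      rw [hθ, hα]
      have he : 2*Real.pi*(l:ℝ)/m + 2*(Real.pi/m) = (2*Real.pi*l + 2*Real.pi)/m := by ring
      rw [he, div_le_iff₀ hmr]
      have hlm : (l:ℝ) + 1 ≤ m := by exact_mod_cast hl2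
      nlinarith [Real.pi_pos]
    have hcc : Real.cos (θ + α) ≤ Real.cos α := by
      rcases le_or_gt (θ + α) Real.pi with h|h
      · exact Real.cos_le_cos_of_nonneg_of_le_pi hα1.le h (by linarith)
      · have h1 : Real.cos (θ + α) = Real.cos (2*Real.pi - (θ+α)) := (Real.cos_two_pi_sub _).symm
        rw [h1]
        exact Real.cos_le_cos_of_nonneg_of_le_pi hα1.le (by linarith) (by linarith)
    have hΛeq : 2*c - 2*c*Real.cos θ + Real.sin θ
        = (Real.cos α - Real.cos (θ+α))/Real.sin α := by
      rw [Real.cos_add, hc, Real.tan_eq_sin_div_cos]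
      field_simp
      ring
    rw [hΛeq]
    exact div_nonneg (by linarith) hsin.le
  -- conjugation and reality facts
  have hTT' : T' = (starRingEnd ℂ) T := by
    rw [hT, hT', map_sum]
    exact Finset.sum_congr rfl fun k _ => (inner_conj_symm _ _).symm
  have hPreal : P = ((∑ k ∈ range m, ‖p k‖^2 : ℝ) : ℂ) := by
    rw [hP]
    push_cast
    exact Finset.sum_congr rfl fun k _ => inner_self_eq_norm_sq_to_K _
  have hcoe : ((∑ l ∈ range m, (2*c - 2*c*Real.cos (2*Real.pi*l/m)
        + Real.sin (2*Real.pi*l/m)) * ‖b l‖^2 : ℝ) : ℂ)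
      = ∑ l ∈ range m, μ l * (inner ℂ (b l) (b l) : ℂ) := by
    rw [Complex.ofReal_sum]
    refine Finset.sum_congr rfl fun l _ => ?_
    have hin : (inner ℂ (b l) (b l) : ℂ) = ((‖b l‖^2 : ℝ) : ℂ) := by
      exact_mod_cast inner_self_eq_norm_sq_to_K (b l)
    rw [hμreal l, hin, ← Complex.ofReal_mul]
  have hnonneg : (0:ℝ) ≤ ∑ l ∈ range m, (2*c - 2*c*Real.cos (2*Real.pi*l/m)
      + Real.sin (2*Real.pi*l/m)) * ‖b l‖^2 :=
    Finset.sum_nonneg fun l hl => mul_nonneg (hΛpos l hl) (by positivity)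
  have hrhs : (m:ℂ) * (2*(c:ℂ)*P - ((c:ℂ)+I/2)*T' - ((c:ℂ)-I/2)*T)
      = ((m * (2*c*(∑ k ∈ range m, ‖p k‖^2) - 2*c*T.re - T.im) : ℝ) : ℂ) := by
    rw [hTT', hPreal]
    exact hrhs_aux m c _ T
  have hmr : (0:ℝ) < m := by positivity
  have hkey : T.im ≤ 2*c*(∑ k ∈ range m, ‖p k‖^2) - 2*c*T.re := by
    have h1 := hcoe.trans (hmain.trans hrhs)
    have h2 : (∑ l ∈ range m, (2*c - 2*c*Real.cos (2*Real.pi*l/m)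
        + Real.sin (2*Real.pi*l/m)) * ‖b l‖^2)
        = m * (2*c*(∑ k ∈ range m, ‖p k‖^2) - 2*c*T.re - T.im) := by
      exact Complex.ofReal_injective h1
    rw [h2] at hnonneg
    nlinarith
  -- side lengths
  have hshift : ∑ k ∈ range m, ‖p (k+1)‖^2 = ∑ k ∈ range m, ‖p k‖^2 := by
    have h3 := Finset.sum_range_succ' (fun k => ‖p k‖^2) m
    have h4 := Finset.sum_range_succ (fun k => ‖p k‖^2) m
    simp only [hp0, hpm, norm_zero] at h3 h4
    rw [h3] at h4
    simpa using h4
  have hside : ∑ k ∈ range m, ‖p (k+1) - p k‖^2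
      = 2*(∑ k ∈ range m, ‖p k‖^2) - 2*T.re := by
    have h1 : ∀ k ∈ range m, ‖p (k+1) - p k‖^2
        = ‖p (k+1)‖^2 + ‖p k‖^2 - 2*((inner ℂ (p k) (p (k+1)) : ℂ)).re := by
      intro k _
      have h2 := @norm_sub_sq ℂ _ _ _ _ (p (k+1)) (p k)
      have h3 : (inner ℂ (p (k+1)) (p k) : ℂ).re = (inner ℂ (p k) (p (k+1)) : ℂ).re := by
        rw [← inner_conj_symm (p k) (p (k+1))]
        exact Complex.conj_re _
      rw [h2]
      simp only [RCLike.re_to_complex]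
      rw [h3]
      ring
    rw [Finset.sum_congr rfl h1]
    have h5 : T.re = ∑ k ∈ range m, ((inner ℂ (p k) (p (k+1)) : ℂ)).re := by
      rw [hT, Complex.re_sum]
    rw [Finset.sum_sub_distrib, Finset.sum_add_distrib, hshift, ← Finset.mul_sum, ← h5]
    ring
  -- finish
  have him : ∑ k ∈ range m, (inner ℂ (p k) (p (k+1)) : ℂ).im = T.im := by
    rw [hT, Complex.im_sum]
  rw [him, hside]
  nlinarith [hkey]

end AuxPolygon

open Real in
/-- the symplectic action of a closed polygon in `ℂⁿ` with side vectors
`v 0, …, v (m−1)` summing to zero is at most `(1 / (4 tan(π/m))) · Σ ‖v i‖²`. -/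
theorem polygon_action_upper_bound {n : ℕ} (m : ℕ) (hm : 3 ≤ m) (v : ℕ → Cn n)
    (hv : ∑ j ∈ Finset.range m, v j = 0)
    (p : ℕ → Cn n) (hp : ∀ k, p k = ∑ j ∈ Finset.range k, v j) :
    (1 / 2) * ∑ k ∈ Finset.range m, symp (p k) (p (k + 1)) ≤
      (1 / (4 * Real.tan (π / m))) * ∑ i ∈ Finset.range m, ‖v i‖ ^ 2 := by
  have hp0 : p 0 = 0 := by rw [hp]; simp
  have hpm : p m = 0 := by rw [hp m]; exact hv
  have hkey := key m hm p hp0 hpm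
  have hΔ : ∀ i, v i = p (i+1) - p i := by
    intro i
    rw [hp, hp, Finset.sum_range_succ]
    abel
  have h2 : ∑ i ∈ Finset.range m, ‖v i‖ ^ 2 = ∑ k ∈ Finset.range m, ‖p (k+1) - p k‖ ^ 2 :=
    Finset.sum_congr rfl fun i _ => by rw [hΔ]
  have h3 : ∑ k ∈ Finset.range m, symp (p k) (p (k + 1))
      = ∑ k ∈ Finset.range m, (inner ℂ (p k) (p (k+1)) : ℂ).im :=
    Finset.sum_congr rfl fun k _ => rfl
  rw [h2, h3]
  calc (1/2) * ∑ k ∈ Finset.range m, (inner ℂ (p k) (p (k+1)) : ℂ).im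
      ≤ (1/2) * ((1/(2*Real.tan (π/m))) * ∑ k ∈ Finset.range m, ‖p (k+1) - p k‖ ^ 2) := by
        linarith [hkey]
    _ = (1 / (4 * Real.tan (π / m))) * ∑ k ∈ Finset.range m, ‖p (k+1) - p k‖ ^ 2 := by
        ring
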